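/- Let t and β be positive real numbers with t < 1, and define h : [0,∞) → [0,∞) by h(x) = max(x − β·x^t, 0). Then for every real x ≥ 0 there exists a natural number m with m ≤ x^{1−t}/(β(1−t)) + 1 such that the m-fold iterate h^m(x) is strictly less than 1. -/

import Mathlib

open Real

private lemma hstep_key (t β : ℝ) (ht0 : 0 < t) (ht1 : t < 1) (hβ : 0 < β)
    (x : ℝ) (hx1 : 1 ≤ x) (hy : 0 ≤ x - β * x ^ t) :
    (x - β * x ^ t) ^ (1 - t) ≤ x ^ (1 - t) - β * (1 - t) := by
  have hx0 : 0 < x := lt_of_lt_of_le one_pos hx1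
  set u : ℝ := (x - β * x ^ t) / x with hu
  have hu0 : 0 ≤ u := div_nonneg hy hx0.le
  have hb : u ^ (1 - t) ≤ 1 + (1 - t) * (u - 1) := by
    have := rpow_one_add_le_one_add_mul_self (s := u - 1) (by linarith) (p := 1 - t)
      (by linarith) (by linarith)
    simpa using this
  have hxy : x - β * x ^ t = u * x := by
    field_simp [hu]
    rw [hu, mul_div_cancel₀ _ hx0.ne']
  have hmain : (u * x) ^ (1 - t) ≤ x ^ (1 - t) - β * (1 - t) := by
    rw [Real.mul_rpow hu0 hx0.le]
    have h1 : u ^ (1 - t) * x ^ (1 - t) ≤ (1 + (1 - t) * (u - 1)) * x ^ (1 - t) :=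
      mul_le_mul_of_nonneg_right hb (Real.rpow_nonneg hx0.le _)
    refine h1.trans ?_
    have hu1 : u - 1 = -(β * x ^ t / x) := by
      field_simp [hu]
      linear_combination -hxy
    rw [hu1]
    have hxt : x ^ t / x * x ^ (1 - t) = 1 := by
      rw [div_mul_eq_mul_div, ← Real.rpow_add hx0, show t + (1 - t) = 1 by ring,
        Real.rpow_one, div_self hx0.ne']
    have : (1 + (1 - t) * -(β * x ^ t / x)) * x ^ (1 - t)
        = x ^ (1 - t) - β * (1 - t) * (x ^ t / x * x ^ (1 - t)) := by ring
    rw [this, hxt, mul_one]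
  rwa [hxy]

private lemma hiter_aux (t β : ℝ) (ht0 : 0 < t) (ht1 : t < 1) (hβ : 0 < β) :
    ∀ n : ℕ, ∀ x : ℝ, 0 ≤ x → x ^ (1 - t) ≤ n * (β * (1 - t)) →
      (fun y : ℝ => max (y - β * y ^ t) 0)^[n] x < 1 := by
  set h : ℝ → ℝ := fun y : ℝ => max (y - β * y ^ t) 0 with hh
  have hmono : ∀ y : ℝ, 0 ≤ y → h y ≤ y := by
    intro y hy
    simp only [hh]
    exact max_le (by nlinarith [Real.rpow_nonneg hy t]) hy
  have hnn : ∀ y : ℝ, 0 ≤ h y := fun y => le_max_right _ _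
  have h0 : h 0 = 0 := by
    simp [hh, Real.zero_rpow ht0.ne']
  have hiter0 : ∀ n : ℕ, h^[n] 0 = 0 := by
    intro n; induction n with
    | zero => rfl
    | succ n ih => rw [Function.iterate_succ_apply, h0, ih]
  have hlt1 : ∀ n : ℕ, ∀ y : ℝ, 0 ≤ y → y < 1 → h^[n] y < 1 := by
    intro n
    induction n with
    | zero => intro y _ hy1; simpa using hy1
    | succ n ih =>
      intro y hy hy1
      rw [Function.iterate_succ_apply]
      exact ih _ (hnn y) (lt_of_le_of_lt (hmono y hy) hy1)
  intro n
  induction n with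
  | zero =>
    intro x hx hle
    simp only [Nat.cast_zero, zero_mul] at hle
    have : x ^ (1 - t) = 0 := le_antisymm hle (Real.rpow_nonneg hx _)
    have hx0 : x = 0 := by
      by_contra hne
      have : (0:ℝ) < x := lt_of_le_of_ne hx (Ne.symm hne)
      exact absurd ‹x ^ (1-t) = 0› (ne_of_gt (Real.rpow_pos_of_pos this _))
    simp [hx0]
  | succ n ih =>
    intro x hx hle
    by_cases hx1 : x < 1
    · exact hlt1 _ x hx hx1
    push_neg at hx1
    rw [Function.iterate_succ_apply]
    by_cases hy : 0 ≤ x - β * x ^ t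
    · have hhx : h x = x - β * x ^ t := max_eq_left hy
      rw [hhx]
      apply ih _ hy
      have := hstep_key t β ht0 ht1 hβ x hx1 hy
      push_cast at hle ⊢
      linarith
    · have hhx : h x = 0 := max_eq_right (le_of_not_ge hy)
      rw [hhx, hiter0]
      exact one_pos

/-- Iterating `h x = max (x - β * x ^ t) 0` drives any `x ≥ 0` below `1`
within `x ^ (1 - t) / (β * (1 - t)) + 1` steps. -/
theorem iterate_below_one
    (t β : ℝ) (ht0 : 0 < t) (ht1 : t < 1) (hβ : 0 < β)
    (x : ℝ) (hx : 0 ≤ x) :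
    ∃ m : ℕ, (m : ℝ) ≤ x ^ (1 - t) / (β * (1 - t)) + 1 ∧
      (fun y : ℝ => max (y - β * y ^ t) 0)^[m] x < 1 := by
  have hc : 0 < β * (1 - t) := mul_pos hβ (by linarith)
  set φ : ℝ := x ^ (1 - t) / (β * (1 - t)) with hφ
  have hφ0 : 0 ≤ φ := div_nonneg (Real.rpow_nonneg hx _) hc.le
  refine ⟨⌈φ⌉₊, ?_, ?_⟩
  · exact (Nat.ceil_lt_add_one hφ0).le
  · apply hiter_aux t β ht0 ht1 hβ _ x hx
    have : φ ≤ (⌈φ⌉₊ : ℝ) := Nat.le_ceil φ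
    calc x ^ (1 - t) = φ * (β * (1 - t)) := by rw [hφ, div_mul_cancel₀ _ hc.ne']
      _ ≤ (⌈φ⌉₊ : ℝ) * (β * (1 - t)) := mul_le_mul_of_nonneg_right this hc.le
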